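/- arXiv:2102.04660 — 2 statements merged into one kernel-verified Lean document; each statement's English description precedes it below -/
import Mathlib

section
/- If a Merkle path verification for leaf y against root MR succeeds, and the compression hash is collision-resistant (modeled as injective), then y is indeed one of the leaves of the tree whose root is MR. -/
def merkleRoot {α : Type} (f : α → α → α) : (h : ℕ) → (Fin (2 ^ h) → α) → α
  | 0, l => l ⟨0, by norm_num⟩
  | h + 1, l =>
      merkleRoot f h fun i =>
        f (l ⟨2 * i.val, by have := i.isLt; rw [pow_succ]; omega⟩)
          (l ⟨2 * i.val + 1, by have := i.isLt; rw [pow_succ]; omega⟩)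

def recomputeRoot {α : Type} (f : α → α → α) : ℕ → α → List α → α
  | _, y, [] => y
  | i, y, s :: rest =>
      recomputeRoot f (i / 2) (if i % 2 = 0 then f y s else f s y) rest

lemma merkle_aux {α : Type} (f : α → α → α)
    (hf : Function.Injective fun p : α × α => f p.1 p.2) :
    ∀ (h : ℕ) (l : Fin (2 ^ h) → α) (i : ℕ) (y : α) (path : List α),
      path.length = h → recomputeRoot f i y path = merkleRoot f h l →
      ∃ j : Fin (2 ^ h), l j = y := by
  intro h
  induction h with
  | zero =>
    intro l i y path hlen hv
    rw [List.length_eq_zero_iff] at hlen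
    subst hlen
    exact ⟨⟨0, by norm_num⟩, hv.symm⟩
  | succ h ih =>
    intro l i y path hlen hv
    cases path with
    | nil => simp at hlen
    | cons s rest =>
      simp at hlen
      have hv' : recomputeRoot f (i / 2) (if i % 2 = 0 then f y s else f s y) rest
          = merkleRoot f h (fun j : Fin (2 ^ h) =>
            f (l ⟨2 * j.val, by have := j.isLt; rw [pow_succ]; omega⟩)
              (l ⟨2 * j.val + 1, by have := j.isLt; rw [pow_succ]; omega⟩)) := hv
      obtain ⟨j, hj⟩ := ih _ _ _ _ hlen hv'
      by_cases hp : i % 2 = 0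
      · rw [if_pos hp] at hj
        have h1 : (fun p : α × α => f p.1 p.2)
            (l ⟨2 * j.val, by have := j.isLt; rw [pow_succ]; omega⟩,
             l ⟨2 * j.val + 1, by have := j.isLt; rw [pow_succ]; omega⟩)
            = (fun p : α × α => f p.1 p.2) (y, s) := hj
        have h2 := hf h1
        exact ⟨_, congrArg Prod.fst h2⟩
      · rw [if_neg hp] at hj
        have h1 : (fun p : α × α => f p.1 p.2)
            (l ⟨2 * j.val, by have := j.isLt; rw [pow_succ]; omega⟩,
             l ⟨2 * j.val + 1, by have := j.isLt; rw [pow_succ]; omega⟩)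
            = (fun p : α × α => f p.1 p.2) (s, y) := hj
        have h2 := hf h1
        exact ⟨_, congrArg Prod.snd h2⟩

/-- If Merkle path verification of a leaf value `y` at position `i` against the
root `merkleRoot f h l` succeeds, and the compression function `f` is injective
(idealized collision resistance), then `y` really is one of the leaves `l`. -/
theorem merkle_path_verification_sound {α : Type} (f : α → α → α)
    (hf : Function.Injective fun p : α × α => f p.1 p.2)
    (h : ℕ) (l : Fin (2 ^ h) → α) (i : Fin (2 ^ h)) (y : α) (path : List α)
    (hlen : path.length = h)
    (hverify : recomputeRoot f i.val y path = merkleRoot f h l) :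
    ∃ j : Fin (2 ^ h), l j = y := by
  exact merkle_aux f hf h l i.val y path hlen hverify
end

section
/- Suppose each withdrawal submitted at time t on one chain becomes visible on the other chain by time t + D, and withdrawals are only finalized after a processing delay of at least D + 1. Then if a user submits two withdrawals with the same nullifier sn (at times t₁ ≤ t₂, on either of the two chains), at the finalization time of the first withdrawal (t₁ + D + 1) both withdrawal events with nullifier sn are visible to the chain processing it, so the duplicate is detected and no two withdrawals with the same nullifier are both finalized. -/
/-- A withdrawal event: the chain it was submitted on (two chains, modeled by
`Bool`), its nullifier, and its submission time. -/
structure WEvent (N : Type) where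
  chain : Bool
  nullifier : N
  time : ℕ

/-- An event submitted at time `e.time` on chain `e.chain` is visible on its own
chain from time `e.time` on, and on the other chain from time `e.time + D` on. -/
def visible {N : Type} (D : ℕ) (e : WEvent N) (c : Bool) (t : ℕ) : Prop :=
  if e.chain = c then e.time ≤ t else e.time + D ≤ t

/-- A withdrawal event `e` (from the set `events`) is finalized, with processing
delay `D + 1`, iff at time `e.time + D + 1` no other event with the same
nullifier is visible on the finalizing chain `e.chain`. -/
def finalized {N : Type} (D : ℕ) (events : Set (WEvent N)) (e : WEvent N) : Prop :=
  e ∈ events ∧ ∀ e' ∈ events, e' ≠ e → e'.nullifier = e.nullifier →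
    ¬ visible D e' e.chain (e.time + D + 1)

/-- With a processing delay of `D + 1`, no two distinct withdrawals with the same
nullifier (submitted at times `t₁ ≤ t₂`, on either chain) are both finalized:
the duplicate nullifier is detected. -/
theorem no_double_withdrawal {N : Type} (D : ℕ) (events : Set (WEvent N))
    (e₁ e₂ : WEvent N) (h₁ : e₁ ∈ events) (h₂ : e₂ ∈ events) (hne : e₁ ≠ e₂)
    (hsn : e₁.nullifier = e₂.nullifier) (horder : e₁.time ≤ e₂.time) :
    ¬ (finalized D events e₁ ∧ finalized D events e₂) := by
  rintro ⟨_, _, hf₂⟩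
  exact hf₂ e₁ h₁ hne hsn (by unfold visible; split <;> omega)
end
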